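/- Let L > 0 and consider the open set D = {(Q,P) ∈ ℝ² : P² + Q² < 2L}. Define on D the smooth functions x1(Q,P) = −P·R, x2(Q,P) = Q·R, x3(Q,P) = L − (P² + Q²), where R = √(2L − P² − Q²). Then, with the canonical Poisson bracket {f,g} = (∂f/∂Q)(∂g/∂P) − (∂f/∂P)(∂g/∂Q), the following relations hold identically on D: {x1, x2} = 2 x3, {x2, x3} = 2 x1, and {x3, x1} = 2 x2. -/

import Mathlib

open Real

/-- Canonical Poisson bracket in the plane:
`{f,g} = (∂f/∂Q)(∂g/∂P) − (∂f/∂P)(∂g/∂Q)`. -/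
noncomputable def poissonBracket (f g : ℝ → ℝ → ℝ) (Q P : ℝ) : ℝ :=
  deriv (fun Q' => f Q' P) Q * deriv (fun P' => g Q P') P
    - deriv (fun P' => f Q P') P * deriv (fun Q' => g Q' P) Q

/-- First invariant `x1 = −P·√(2L − P² − Q²)` (as a function of `(Q,P)`). -/
noncomputable def x1 (L Q P : ℝ) : ℝ := -P * Real.sqrt (2 * L - P ^ 2 - Q ^ 2)

/-- Second invariant `x2 = Q·√(2L − P² − Q²)`. -/
noncomputable def x2 (L Q P : ℝ) : ℝ := Q * Real.sqrt (2 * L - P ^ 2 - Q ^ 2)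

/-- Third invariant `x3 = L − (P² + Q²)`. -/
noncomputable def x3 (L Q P : ℝ) : ℝ := L - (P ^ 2 + Q ^ 2)

lemma sqrt_hasDerivAt_Q (L Q P : ℝ) (h : P ^ 2 + Q ^ 2 < 2 * L) :
    HasDerivAt (fun Q' => Real.sqrt (2 * L - P ^ 2 - Q' ^ 2))
      (-Q / Real.sqrt (2 * L - P ^ 2 - Q ^ 2)) Q := by
  have hr : (0:ℝ) < 2 * L - P ^ 2 - Q ^ 2 := by linarith
  have hu : HasDerivAt (fun Q' : ℝ => 2 * L - P ^ 2 - Q' ^ 2) (-(2 * Q)) Q := by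
    simpa using ((hasDerivAt_pow 2 Q).const_sub (2 * L - P ^ 2))
  have := (Real.hasDerivAt_sqrt hr.ne').comp Q hu
  refine this.congr_deriv ?_
  have hs : Real.sqrt (2 * L - P ^ 2 - Q ^ 2) ≠ 0 := (Real.sqrt_pos.mpr hr).ne'
  field_simp

lemma sqrt_hasDerivAt_P (L Q P : ℝ) (h : P ^ 2 + Q ^ 2 < 2 * L) :
    HasDerivAt (fun P' => Real.sqrt (2 * L - P' ^ 2 - Q ^ 2))
      (-P / Real.sqrt (2 * L - P ^ 2 - Q ^ 2)) P := by
  have hr : (0:ℝ) < 2 * L - P ^ 2 - Q ^ 2 := by linarith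
  have hu : HasDerivAt (fun P' : ℝ => 2 * L - P' ^ 2 - Q ^ 2) (-(2 * P)) P := by
    simpa using (((hasDerivAt_pow 2 P).const_sub (2 * L)).sub_const (Q ^ 2))
  have := (Real.hasDerivAt_sqrt hr.ne').comp P hu
  refine this.congr_deriv ?_
  have hs : Real.sqrt (2 * L - P ^ 2 - Q ^ 2) ≠ 0 := (Real.sqrt_pos.mpr hr).ne'
  field_simp

theorem chart_is_canonical_so3_relations (L : ℝ) (hL : 0 < L)
    (Q P : ℝ) (h : P ^ 2 + Q ^ 2 < 2 * L) :
    poissonBracket (x1 L) (x2 L) Q P = 2 * x3 L Q P ∧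
    poissonBracket (x2 L) (x3 L) Q P = 2 * x1 L Q P ∧
    poissonBracket (x3 L) (x1 L) Q P = 2 * x2 L Q P := by
  have hr : (0:ℝ) < 2 * L - P ^ 2 - Q ^ 2 := by linarith
  set R := Real.sqrt (2 * L - P ^ 2 - Q ^ 2) with hRdef
  have hR : 0 < R := Real.sqrt_pos.mpr hr
  have hR2 : R ^ 2 = 2 * L - P ^ 2 - Q ^ 2 := Real.sq_sqrt hr.le
  have hQ := sqrt_hasDerivAt_Q L Q P h
  have hP := sqrt_hasDerivAt_P L Q P h
  -- partial derivatives
  have d1Q : deriv (fun Q' => x1 L Q' P) Q = -P * (-Q / R) := by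
    unfold x1
    exact (hQ.const_mul (-P)).deriv
  have d1P : deriv (fun P' => x1 L Q P') P = -R + -P * (-P / R) := by
    unfold x1
    have : HasDerivAt (fun P' => -P' * Real.sqrt (2 * L - P' ^ 2 - Q ^ 2))
        (-1 * R + -P * (-P / R)) P := by
      have hneg : HasDerivAt (fun P' : ℝ => -P') (-1) P := (hasDerivAt_id P).neg
      exact hneg.mul hP
    rw [this.deriv]; ring
  have d2Q : deriv (fun Q' => x2 L Q' P) Q = R + Q * (-Q / R) := by
    unfold x2
    have : HasDerivAt (fun Q' => Q' * Real.sqrt (2 * L - P ^ 2 - Q' ^ 2))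
        (1 * R + Q * (-Q / R)) Q := (hasDerivAt_id Q).mul hQ
    rw [this.deriv]; ring
  have d2P : deriv (fun P' => x2 L Q P') P = Q * (-P / R) := by
    unfold x2
    exact (hP.const_mul Q).deriv
  have d3Q : deriv (fun Q' => x3 L Q' P) Q = -(2 * Q) := by
    unfold x3
    have : HasDerivAt (fun Q' : ℝ => L - (P ^ 2 + Q' ^ 2)) (-(0 + 2 * Q)) Q := by
      exact HasDerivAt.const_sub L (by simpa using (hasDerivAt_pow 2 Q).const_add (P ^ 2))
    simpa using this.deriv
  have d3P : deriv (fun P' => x3 L Q P') P = -(2 * P) := by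
    unfold x3
    have : HasDerivAt (fun P' : ℝ => L - (P' ^ 2 + Q ^ 2)) (-(2 * P + 0)) P := by
      exact HasDerivAt.const_sub L (by simpa using (hasDerivAt_pow 2 P).add_const (Q ^ 2))
    simpa using this.deriv
  unfold poissonBracket
  rw [d1Q, d1P, d2Q, d2P, d3Q, d3P]
  unfold x1 x2 x3
  rw [← hRdef]
  have hRne : R ≠ 0 := hR.ne'
  refine ⟨?_, ?_, ?_⟩ <;> field_simp <;> nlinarith [hR2, sq_nonneg R]
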